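/- Let ρ be a density matrix in the family with X matrix of the block form X = ⊕_{i=0}^{d_A/2 - 1} [[0, x_i],[x_i*, 0]] (d_A even). Then ρ^Γ is positive semidefinite if and only if all x_i = 0, and in that case ρ is separable. Hence for this subfamily, ρ is separable if and only if ρ is PPT. -/

import Mathlib

open Complex Matrix BigOperators
open scoped ComplexOrder

noncomputable section

def PT {dA dB : ℕ} (ρ : Matrix (Fin dA × Fin dB) (Fin dA × Fin dB) ℂ) :
    Matrix (Fin dA × Fin dB) (Fin dA × Fin dB) ℂ :=
  fun p q => ρ (p.1, q.2) (q.1, p.2)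

def famState (dA dB : ℕ) (x : ℕ → ℕ → ℂ) (M N : ℕ → ℕ → ℕ → ℂ) :
    Matrix (Fin dA × Fin dB) (Fin dA × Fin dB) ℂ :=
  fun p q =>
    (if (p.2 : ℕ) = (q.1 : ℕ) ∧ (q.2 : ℕ) = (p.1 : ℕ) then x p.1 q.1 else 0) +
    (if p.1 = q.1 ∧ (p.2 : ℕ) < (p.1 : ℕ) ∧ (q.2 : ℕ) < (q.1 : ℕ) then M p.1 p.2 q.2 else 0) +
    (if p.1 = q.1 ∧ (p.1 : ℕ) < (p.2 : ℕ) ∧ (q.1 : ℕ) < (q.2 : ℕ) then N p.1 p.2 q.2 else 0)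

def SepState {dA dB : ℕ} (ρ : Matrix (Fin dA × Fin dB) (Fin dA × Fin dB) ℂ) : Prop :=
  ∃ (n : ℕ) (p : Fin n → ℝ) (A : Fin n → Matrix (Fin dA) (Fin dA) ℂ)
    (B : Fin n → Matrix (Fin dB) (Fin dB) ℂ),
    (∀ i, 0 ≤ p i) ∧ (∑ i, p i = 1) ∧
    (∀ i, (A i).PosSemidef ∧ (A i).trace = 1) ∧
    (∀ i, (B i).PosSemidef ∧ (B i).trace = 1) ∧
    ρ = ∑ i, (p i : ℂ) • (Matrix.kroneckerMap (· * ·) (A i) (B i))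

namespace AuxSep

variable {n : Type*} [Fintype n] [DecidableEq n]

lemma star_single (p : n) (a : ℂ) :
    star (Pi.single p a : n → ℂ) = Pi.single p (star a) := by
  funext i
  rcases eq_or_ne i p with rfl | h
  · simp
  · simp [Pi.single_apply, h]

lemma psd_diag_nonneg {A : Matrix n n ℂ} (hA : A.PosSemidef) (i : n) : 0 ≤ A i i := by
  have h := hA.dotProduct_mulVec_nonneg (Pi.single i 1)
  simpa [star_single, Matrix.mulVec_single, single_dotProduct] using h

lemma psd_offdiag_zero {A : Matrix n n ℂ} (hA : A.PosSemidef) {p q : n} (hpq : p ≠ q)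
    (hp : A p p = 0) (hq : A q q = 0) : A p q = 0 := by
  have hqp : A q p = star (A p q) := by
    rw [hA.1.apply]
  set a : ℂ := -(A p q) with ha
  have h := hA.dotProduct_mulVec_nonneg ((Pi.single p a : n → ℂ) + Pi.single q 1)
  have hv : star ((Pi.single p a : n → ℂ) + Pi.single q 1) =
      (Pi.single p (star a) : n → ℂ) + Pi.single q 1 := by
    rw [star_add, star_single, star_single, star_one]
  rw [Matrix.mulVec_add, Matrix.mulVec_single, Matrix.mulVec_single, hv,
    add_dotProduct, single_dotProduct, single_dotProduct] at h
  simp only [Pi.add_apply, Pi.smul_apply, MulOpposite.smul_eq_mul_unop, MulOpposite.unop_op,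
    Matrix.col_apply, hp, hq, hqp] at h
  have hform : star a * ((0 : ℂ) * a + A p q * 1) + 1 * (star (A p q) * a + 0 * 1)
      = -(2 * ((starRingEnd ℂ) (A p q) * A p q)) := by
    rw [ha]
    ring_nf
    simp [RingHom.coe_comp]
    ring
  rw [hform] at h
  have h2 : (0:ℂ) ≤ -(2 * (Complex.normSq (A p q) : ℂ)) := by
    rwa [Complex.normSq_eq_conj_mul_self]
  have h3 : (0:ℝ) ≤ -(2 * Complex.normSq (A p q)) := by
    have := h2
    rw [show -(2 * (Complex.normSq (A p q) : ℂ)) = ((-(2 * Complex.normSq (A p q)) : ℝ) : ℂ) by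
      push_cast; ring] at this
    exact Complex.zero_le_real.mp this
  have h4 : Complex.normSq (A p q) = 0 := by nlinarith [Complex.normSq_nonneg (A p q)]
  exact Complex.normSq_eq_zero.mp h4

lemma psd_zero_of_trace_zero {A : Matrix n n ℂ} (hA : A.PosSemidef)
    (htr : A.trace = 0) : A = 0 := by
  have hdiag : ∀ i, A i i = 0 := by
    have hsum : ∑ i, A i i = 0 := htr
    intro i
    have := (Finset.sum_eq_zero_iff_of_nonneg
      (fun j _ => psd_diag_nonneg hA j)).mp hsum i (Finset.mem_univ i)
    exact this
  ext i j
  rcases eq_or_ne i j with rfl | h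
  · simpa using hdiag i
  · simpa using psd_offdiag_zero hA h (hdiag i) (hdiag j)

lemma psd_trace_real {A : Matrix n n ℂ} (hA : A.PosSemidef) :
    A.trace = ((A.trace).re : ℂ) ∧ 0 ≤ (A.trace).re := by
  have h : (0:ℂ) ≤ A.trace := by
    rw [Matrix.trace]
    exact Finset.sum_nonneg fun i _ => psd_diag_nonneg hA i
  obtain ⟨hre, him⟩ := Complex.nonneg_iff.mp h
  exact ⟨by apply Complex.ext <;> simp [← him], hre⟩

lemma psd_smul_real {A : Matrix n n ℂ} (hA : A.PosSemidef) {c : ℝ} (hc : 0 ≤ c) :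
    ((c : ℂ) • A).PosSemidef := by
  refine Matrix.PosSemidef.of_dotProduct_mulVec_nonneg ?_ ?_
  · unfold Matrix.IsHermitian
    rw [Matrix.conjTranspose_smul, hA.1, Complex.star_def, Complex.conj_ofReal]
  · intro v
    rw [Matrix.smul_mulVec, dotProduct_smul, smul_eq_mul]
    exact mul_nonneg (Complex.zero_le_real.mpr hc) (hA.dotProduct_mulVec_nonneg v)

lemma psd_sum {ι : Type*} (s : Finset ι) (f : ι → Matrix n n ℂ)
    (h : ∀ i ∈ s, (f i).PosSemidef) : (∑ i ∈ s, f i).PosSemidef := by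
  classical
  induction s using Finset.induction_on with
  | empty => simpa using Matrix.PosSemidef.zero
  | insert _ _ hx ih =>
    rw [Finset.sum_insert hx]
    exact (h _ (Finset.mem_insert_self _ _)).add
      (ih fun i hi => h i (Finset.mem_insert_of_mem hi))

lemma psd_kron {m l : Type*} [Fintype m] [DecidableEq m] [Fintype l] [DecidableEq l]
    {A : Matrix m m ℂ} {B : Matrix l l ℂ} (hA : A.PosSemidef) (hB : B.PosSemidef) :
    (Matrix.kroneckerMap (· * ·) A B).PosSemidef := by
  exact hA.kronecker hB

lemma psd_std (m : n) : (Matrix.single m m (1:ℂ)).PosSemidef := by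
  have hconj : (Matrix.single m m (1:ℂ))ᴴ = Matrix.single m m (1:ℂ) := by
    ext i j
    simp [Matrix.conjTranspose_apply, Matrix.single, Matrix.of_apply, and_comm,
      apply_ite (star : ℂ → ℂ)]
  have hmul : Matrix.single m m (1:ℂ) * Matrix.single m m (1:ℂ)
      = Matrix.single m m (1:ℂ) := by
    rw [Matrix.single_mul_single_same, one_mul]
  have : Matrix.single m m (1:ℂ)
      = (Matrix.single m m (1:ℂ))ᴴ * Matrix.single m m (1:ℂ) := by
    rw [hconj, hmul]
  rw [this]
  exact Matrix.posSemidef_conjTranspose_mul_self _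

lemma trace_std (m : n) : (Matrix.single m m (1:ℂ)).trace = 1 := by
  simp [Matrix.trace, Matrix.diag, Matrix.single, Matrix.of_apply]

lemma pt_psd_of_sep {dA dB : ℕ} {ρ : Matrix (Fin dA × Fin dB) (Fin dA × Fin dB) ℂ}
    (h : SepState ρ) : (PT ρ).PosSemidef := by
  obtain ⟨k, p, A, B, hp, -, hA, hB, rfl⟩ := h
  have hPT : PT (∑ i, (p i : ℂ) • Matrix.kroneckerMap (· * ·) (A i) (B i))
      = ∑ i, (p i : ℂ) • Matrix.kroneckerMap (· * ·) (A i) ((B i)ᵀ) := by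
    ext pq rs
    simp [PT, Matrix.sum_apply, Matrix.smul_apply, smul_eq_mul,
      Matrix.kroneckerMap_apply, Matrix.transpose_apply]
  rw [hPT]
  exact psd_sum _ _ fun i _ =>
    psd_smul_real (psd_kron (hA i).1 ((hB i).1.transpose)) (hp i)

lemma sep_of_zero_x (dA dB : ℕ) (hd : dA ≤ dB) (x : ℕ → ℕ → ℂ) (M N : ℕ → ℕ → ℕ → ℂ)
    (hx : ∀ m k : ℕ, m < dA → k < dA → x m k = 0)
    (hρ : (famState dA dB x M N).PosSemidef)
    (htr : (famState dA dB x M N).trace = 1) :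
    SepState (famState dA dB x M N) := by
  rcases Nat.eq_zero_or_pos dA with h0 | hpos
  · exfalso
    subst h0
    rw [Matrix.trace] at htr
    simp at htr
  have hdB : 0 < dB := lt_of_lt_of_le hpos hd
  set ρ := famState dA dB x M N with hρdef
  set Bm : Fin dA → Matrix (Fin dB) (Fin dB) ℂ :=
    fun m => ρ.submatrix (fun j => (m, j)) (fun j => (m, j)) with hBmdef
  have hBm : ∀ m, (Bm m).PosSemidef := fun m => hρ.submatrix _
  have htrace_sum : ∑ m, (Bm m).trace = 1 := by
    rw [← htr]
    simp only [Matrix.trace, Matrix.diag, hBmdef, Matrix.submatrix_apply]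
    exact (Fintype.sum_prod_type (f := fun p : Fin dA × Fin dB => ρ p p)).symm
  refine ⟨dA, fun m => ((Bm m).trace).re,
    fun m => Matrix.single m m 1,
    fun m => if (Bm m).trace = 0 then Matrix.single ⟨0, hdB⟩ ⟨0, hdB⟩ 1
      else ((Bm m).trace)⁻¹ • Bm m, ?_, ?_, ?_, ?_, ?_⟩
  · exact fun m => (psd_trace_real (hBm m)).2
  · have : (∑ m, ((Bm m).trace).re : ℝ) = ((∑ m, (Bm m).trace).re) := by
      rw [Complex.re_sum]
    rw [this, htrace_sum]
    simp
  · exact fun m => ⟨psd_std m, trace_std m⟩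
  · intro m
    dsimp only
    by_cases h : (Bm m).trace = 0
    · rw [if_pos h]
      exact ⟨psd_std _, trace_std _⟩
    · rw [if_neg h]
      obtain ⟨hre, hnn⟩ := psd_trace_real (hBm m)
      constructor
      · rw [hre, show ((((Bm m).trace.re : ℝ)) : ℂ)⁻¹ = ((((Bm m).trace.re)⁻¹ : ℝ) : ℂ) by
          push_cast; ring]
        exact psd_smul_real (hBm m) (inv_nonneg.mpr hnn)
      · rw [Matrix.trace_smul, smul_eq_mul, inv_mul_cancel₀ h]
  · ext ⟨ma, j⟩ ⟨mb, k⟩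
    rw [Matrix.sum_apply]
    dsimp only
    rw [Finset.sum_eq_single ma]
    · simp only [Matrix.smul_apply, Matrix.kroneckerMap_apply, smul_eq_mul]
      rw [show Matrix.single ma ma (1:ℂ) ma mb = if ma = mb then 1 else 0 by
        simp [Matrix.single, Matrix.of_apply]]
      rcases eq_or_ne ma mb with rfl | hne
      · simp only [if_pos rfl, mul_one]
        have hlhs : ρ (ma, j) (ma, k) = Bm ma j k := rfl
        rw [hlhs]
        by_cases h : (Bm ma).trace = 0
        · rw [if_pos h]
          have hz : Bm ma = 0 := psd_zero_of_trace_zero (hBm ma) h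
          rw [hz]
          simp
        · rw [if_neg h]
          obtain ⟨hre, -⟩ := psd_trace_real (hBm ma)
          rw [Matrix.smul_apply, smul_eq_mul, ← hre]
          have h' : (Bm ma).trace ≠ 0 := h
          field_simp
          simp
      · rw [if_neg hne, zero_mul, mul_zero]
        show famState dA dB x M N (ma, j) (mb, k) = 0
        unfold famState
        rw [hx _ _ ma.isLt mb.isLt]
        simp [hne]
    · intro b _ hb
      simp [Matrix.smul_apply, Matrix.kroneckerMap_apply,
        Matrix.single, Matrix.of_apply, hb]
    · intro h
      exact absurd (Finset.mem_univ ma) h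

end AuxSep

/-- if the `X` matrix of a density matrix of the family has the block
form `X = ⊕_i [[0, x_i],[x_i*, 0]]` (`d_A = 2s` even), then `ρ^Γ` is positive
semidefinite iff all `x_i = 0`, in which case `ρ` is separable; hence `ρ` is
separable iff it is PPT. -/
theorem famState_block_antidiagonal_X (dA dB s : ℕ) (hd : dA ≤ dB) (hs : dA = 2 * s)
    (x : ℕ → ℕ → ℂ) (M N : ℕ → ℕ → ℕ → ℂ) (xs : ℕ → ℂ)
    (hblock : ∀ m n, m < dA → n < dA →
      x m n = if m = n then 0
        else if m / 2 = n / 2 then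
          (if m % 2 = 0 then xs (m / 2) else starRingEnd ℂ (xs (m / 2)))
        else 0)
    (hρ : (famState dA dB x M N).PosSemidef)
    (htr : (famState dA dB x M N).trace = 1) :
    ((PT (famState dA dB x M N)).PosSemidef ↔ ∀ i < s, xs i = 0) ∧
    ((PT (famState dA dB x M N)).PosSemidef → SepState (famState dA dB x M N)) ∧
    (SepState (famState dA dB x M N) ↔ (PT (famState dA dB x M N)).PosSemidef) := by
  have hx_of : (∀ i < s, xs i = 0) → ∀ m k : ℕ, m < dA → k < dA → x m k = 0 := by
    intro h m k hm hk
    rw [hblock m k hm hk]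
    by_cases h1 : m = k
    · simp [h1]
    by_cases h2 : m / 2 = k / 2
    · have hms : m / 2 < s := by omega
      rw [if_neg h1, if_pos h2]
      by_cases h3 : m % 2 = 0
      · rw [if_pos h3, h _ hms]
      · rw [if_neg h3, h _ hms, map_zero]
    · simp [h1, h2]
  have key1 : (PT (famState dA dB x M N)).PosSemidef → ∀ i < s, xs i = 0 := by
    intro hPT i hi
    have h2i : 2 * i < dA := by omega
    have h2i1 : 2 * i + 1 < dA := by omega
    have h2iB : 2 * i < dB := by omega
    have h2i1B : 2 * i + 1 < dB := by omega
    set pp : Fin dA × Fin dB := (⟨2 * i, h2i⟩, ⟨2 * i, h2iB⟩) with hppdef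
    set qq : Fin dA × Fin dB := (⟨2 * i + 1, h2i1⟩, ⟨2 * i + 1, h2i1B⟩) with hqqdef
    have hxd1 : x (2 * i) (2 * i) = 0 := by
      rw [hblock _ _ h2i h2i]; simp
    have hxd2 : x (2 * i + 1) (2 * i + 1) = 0 := by
      rw [hblock _ _ h2i1 h2i1]; simp
    have hxoff : x (2 * i) (2 * i + 1) = xs i := by
      rw [hblock _ _ h2i h2i1]
      have e1 : ¬ (2 * i = 2 * i + 1) := by omega
      have e2 : (2 * i) / 2 = (2 * i + 1) / 2 := by omega
      have e3 : (2 * i) % 2 = 0 := by omega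
      have e4 : (2 * i) / 2 = i := by omega
      rw [if_neg e1, if_pos e2, if_pos e3, e4]
    have hpp0 : PT (famState dA dB x M N) pp pp = 0 := by
      show famState dA dB x M N (pp.1, pp.2) (pp.1, pp.2) = 0
      unfold famState
      simp [hppdef, hxd1]
    have hqq0 : PT (famState dA dB x M N) qq qq = 0 := by
      show famState dA dB x M N (qq.1, qq.2) (qq.1, qq.2) = 0
      unfold famState
      simp [hqqdef, hxd2]
    have hoff : PT (famState dA dB x M N) pp qq = xs i := by
      show famState dA dB x M N (pp.1, qq.2) (qq.1, pp.2) = xs i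
      unfold famState
      have hne : (⟨2 * i, h2i⟩ : Fin dA) ≠ ⟨2 * i + 1, h2i1⟩ := by
        intro h; rw [Fin.mk.injEq] at h; omega
      simp [hppdef, hqqdef, hne, hxoff]
    have hne : pp ≠ qq := by
      intro h
      rw [hppdef, hqqdef, Prod.mk.injEq, Fin.mk.injEq] at h
      omega
    have := AuxSep.psd_offdiag_zero hPT hne hpp0 hqq0
    rw [hoff] at this
    exact this
  have key2 : (∀ i < s, xs i = 0) → SepState (famState dA dB x M N) :=
    fun h => AuxSep.sep_of_zero_x dA dB hd x M N (hx_of h) hρ htr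
  refine ⟨⟨key1, fun h => AuxSep.pt_psd_of_sep (key2 h)⟩,
    fun hPT => key2 (key1 hPT),
    ⟨AuxSep.pt_psd_of_sep, fun hPT => key2 (key1 hPT)⟩⟩
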